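/- A nonsingular m×m real matrix A satisfies the equivalence (x ≤ y componentwise ⇔ A x ≤ A y componentwise, for all x, y ∈ ℝ^m) if and only if A = D P for some positive diagonal matrix D and permutation matrix P. -/

import Mathlib

open Matrix

/-- A permutation matrix. -/
def IsPermMatrix {m : ℕ} (P : Matrix (Fin m) (Fin m) ℝ) : Prop :=
  ∃ σ : Equiv.Perm (Fin m), ∀ i j, P i j = if j = σ i then 1 else 0

theorem order_equiv_iff_pos_diag_mul_perm {m : ℕ} (A : Matrix (Fin m) (Fin m) ℝ)
    (hA : IsUnit A.det) :
    (∀ x y : Fin m → ℝ, x ≤ y ↔ A *ᵥ x ≤ A *ᵥ y) ↔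
      ∃ d : Fin m → ℝ, (∀ i, 0 < d i) ∧
        ∃ P : Matrix (Fin m) (Fin m) ℝ, IsPermMatrix P ∧ A = Matrix.diagonal d * P := by
  constructor
  · intro H
    set B := A⁻¹ with hB
    have hAB : A * B = 1 := Matrix.mul_nonsing_inv A hA
    have hBA : B * A = 1 := Matrix.nonsing_inv_mul A hA
    have hpos : ∀ z : Fin m → ℝ, 0 ≤ z → 0 ≤ A *ᵥ z := by
      intro z hz
      simpa using (H 0 z).mp hz
    have hneg : ∀ z : Fin m → ℝ, 0 ≤ A *ᵥ z → 0 ≤ z := by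
      intro z hz
      exact (H 0 z).mpr (by simpa using hz)
    have hsingle : ∀ j : Fin m, (0 : Fin m → ℝ) ≤ Pi.single j 1 := by
      intro j k
      by_cases h : k = j <;> simp [Pi.single_apply, h]
    have hAnn : ∀ i j, 0 ≤ A i j := by
      intro i j
      have := hpos _ (hsingle j) i
      simpa [Matrix.mulVec_single] using this
    have hBnn : ∀ i j, 0 ≤ B i j := by
      intro i j
      have h2 : A *ᵥ (B *ᵥ Pi.single j 1) = Pi.single j 1 := by
        rw [Matrix.mulVec_mulVec, hAB, Matrix.one_mulVec]
      have := hneg _ (by rw [h2]; exact hsingle j) i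
      simpa [Matrix.mulVec_single] using this
    have keyB : ∀ i k, 0 < A i k → ∀ j, j ≠ i → B k j = 0 := by
      intro i k hik j hji
      have h0 : ∑ l, A i l * B l j = 0 := by
        have h := congrFun (congrFun hAB i) j
        rw [Matrix.mul_apply] at h
        simpa [Matrix.one_apply, (Ne.symm hji : i ≠ j)] using h
      have := (Finset.sum_eq_zero_iff_of_nonneg
        (fun l _ => mul_nonneg (hAnn i l) (hBnn l j))).mp h0 k (Finset.mem_univ k)
      rcases mul_eq_zero.mp this with h | h
      · exact absurd h hik.ne'
      · exact h
    have unique : ∀ i k, 0 < A i k → ∀ k', k' ≠ k → A i k' = 0 := by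
      intro i k hik k' hk'
      have hBk : ∀ j, j ≠ i → B k j = 0 := keyB i k hik
      have h1 : B k i * A i k = 1 := by
        have h := congrFun (congrFun hBA k) k
        rw [Matrix.mul_apply] at h
        rw [Finset.sum_eq_single_of_mem i (Finset.mem_univ i)
          (fun l _ hl => by rw [hBk l hl, zero_mul])] at h
        simpa [Matrix.one_apply] using h
      have h2 : B k i * A i k' = 0 := by
        have h := congrFun (congrFun hBA k) k'
        rw [Matrix.mul_apply] at h
        rw [Finset.sum_eq_single_of_mem i (Finset.mem_univ i)
          (fun l _ hl => by rw [hBk l hl, zero_mul])] at h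
        simpa [Matrix.one_apply, (Ne.symm hk' : k ≠ k')] using h
      have hBki : B k i ≠ 0 := left_ne_zero_of_mul_eq_one h1
      exact (mul_eq_zero.mp h2).resolve_left hBki
    have rowpos : ∀ i, ∃ k, 0 < A i k := by
      intro i
      by_contra h
      push_neg at h
      have hz : ∀ j, A i j = 0 := fun j => le_antisymm (h j) (hAnn i j)
      exact hA.ne_zero (Matrix.det_eq_zero_of_row_eq_zero i hz)
    classical
    let σ0 : Fin m → Fin m := fun i => (rowpos i).choose
    have hσ0 : ∀ i, 0 < A i (σ0 i) := fun i => (rowpos i).choose_spec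
    have inj : Function.Injective σ0 := by
      intro i i' h
      by_contra hne
      have hBz : ∀ j, B (σ0 i) j = 0 := by
        intro j
        by_cases hj : j = i
        · subst hj
          have := keyB i' (σ0 i') (hσ0 i') j hne
          rwa [← h] at this
        · exact keyB i (σ0 i) (hσ0 i) j hj
      have h1 : (1 : Matrix (Fin m) (Fin m) ℝ) (σ0 i) (σ0 i) = 0 := by
        rw [← hBA, Matrix.mul_apply]
        exact Finset.sum_eq_zero fun l _ => by rw [hBz l, zero_mul]
      simp [Matrix.one_apply] at h1
    let σ : Equiv.Perm (Fin m) := Equiv.ofBijective σ0 (Finite.injective_iff_bijective.mp inj)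
    refine ⟨fun i => A i (σ0 i), hσ0, fun i j => if j = σ0 i then 1 else 0, ⟨σ, fun i j => rfl⟩, ?_⟩
    ext i j
    erw [Matrix.diagonal_mul]
    by_cases h : j = σ0 i
    · subst h; simp
    · simp [h, unique i (σ0 i) (hσ0 i) j h]
  · rintro ⟨d, hd, P, ⟨σ, hP⟩, rfl⟩
    have hAx : ∀ (x : Fin m → ℝ) i, ((Matrix.diagonal d * P) *ᵥ x) i = d i * x (σ i) := by
      intro x i
      rw [← Matrix.mulVec_mulVec]
      have hPx : (P *ᵥ x) i = x (σ i) := by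
        simp [Matrix.mulVec, dotProduct, hP]
      simp [Matrix.mulVec_diagonal, hPx]
    intro x y
    constructor
    · intro h i
      rw [hAx, hAx]
      exact mul_le_mul_of_nonneg_left (h _) (hd i).le
    · intro h j
      have := h (σ.symm j)
      rw [hAx, hAx, Equiv.apply_symm_apply] at this
      exact le_of_mul_le_mul_left this (hd _)
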